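/- Let K be a field, n > 1, and a ∈ K[s]^n a nonzero row vector of degree d, with associated coefficient matrix A, basic non-pivotal index set q̃, and row-echelon null vectors b_i. Then the set u = {b_r^♭ : r ∈ q̃} is a μ-basis of a: it has exactly n − 1 elements, the leading vectors LV(b_r^♭) (r ∈ q̃) are linearly independent over K, and u is a basis of the K[s]-module syz(a). -/

import Mathlib

open Polynomial
open scoped Classical

noncomputable section

/-- The degree of a polynomial vector: the maximum of the degrees of the entries. -/
def vdeg {K : Type*} [Field K] {n : ℕ} (h : Fin n → K[X]) : ℕ :=
  Finset.univ.sup fun i => (h i).natDegree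

/-- The leading vector of a polynomial vector: the vector of coefficients of
`s ^ (vdeg h)` in the entries. -/
def LV {K : Type*} [Field K] {n : ℕ} (h : Fin n → K[X]) : Fin n → K :=
  fun i => (h i).coeff (vdeg h)

/-- The syzygy module of a row vector `a` of polynomials. -/
def syz {K : Type*} [Field K] {n : ℕ} (a : Fin n → K[X]) :
    Submodule K[X] (Fin n → K[X]) where
  carrier := {h | ∑ i, a i * h i = 0}
  add_mem' := by
    intro x y hx hy
    simp only [Set.mem_setOf_eq] at *
    simp only [Pi.add_apply, mul_add, Finset.sum_add_distrib, hx, hy, add_zero]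
  zero_mem' := by simp
  smul_mem' := by
    intro c x hx
    simp only [Set.mem_setOf_eq] at *
    have h1 : ∑ i, a i * (c • x) i = c * ∑ i, a i * x i := by
      rw [Finset.mul_sum]
      refine Finset.sum_congr rfl fun i _ => ?_
      simp only [Pi.smul_apply, smul_eq_mul]
      ring
    rw [h1, hx, mul_zero]

/-- The coefficient matrix `A ∈ K^{(2d+1) × n(d+1)}` associated with a polynomial row
vector `a` of degree at most `d`:  `A_{k+1, i+jn} = c_{k-j,i}` where `c_m` is the vector of
coefficients of `s^m` in `a` (with `c_m = 0` for `m < 0` or `m > d`). -/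
def coefA {K : Type*} [Field K] {n : ℕ} (d : ℕ) (hn : 0 < n) (a : Fin n → K[X]) :
    Matrix (Fin (2*d+1)) (Fin (n*(d+1))) K :=
  Matrix.of fun k ℓ =>
    if (ℓ : ℕ) / n ≤ (k : ℕ) then
      (a ⟨(ℓ : ℕ) % n, Nat.mod_lt _ hn⟩).coeff ((k : ℕ) - (ℓ : ℕ) / n)
    else 0

/-- The `♭` isomorphism `K^{n(d+1)} → K[s]^n`: split `v` into `d+1` consecutive blocks
`w_0, …, w_d ∈ K^n` and form `∑_j s^j w_j`. -/
def flatv {K : Type*} [Field K] {n : ℕ} (d : ℕ) (v : Fin (n*(d+1)) → K) : Fin n → K[X] :=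
  fun i => ∑ j : Fin (d+1), C (v ⟨(i:ℕ) + (j:ℕ)*n, by
    calc (i:ℕ) + (j:ℕ)*n < n + (j:ℕ)*n := Nat.add_lt_add_right i.isLt _
      _ = n * ((j:ℕ)+1) := by ring
      _ ≤ n * (d+1) := Nat.mul_le_mul le_rfl j.isLt⟩) * X ^ (j:ℕ)

/-- The `♭` isomorphism `K^m → K[s]` for scalars. -/
def flat1 {K : Type*} [Field K] {m : ℕ} (w : Fin m → K) : K[X] :=
  ∑ k : Fin m, C (w k) * X ^ (k:ℕ)

/-- A column index `j` of a matrix is pivotal if the `j`-th column is not a `K`-linear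
combination of the columns of smaller index. -/
def Pivotal {K : Type*} [Field K] {m N : ℕ} (A : Matrix (Fin m) (Fin N) K) (j : Fin N) : Prop :=
  (fun k => A k j) ∉ Submodule.span K ((fun r : Fin N => fun k => A k r) '' {r | r < j})

/-- A basic non-pivotal index: the minimal non-pivotal index in its residue class modulo `n`. -/
def BasicNP {K : Type*} [Field K] {m N : ℕ} (n : ℕ) (A : Matrix (Fin m) (Fin N) K)
    (r : Fin N) : Prop :=
  ¬ Pivotal A r ∧ ∀ r' : Fin N, ¬ Pivotal A r' → (r':ℕ) % n = (r:ℕ) % n → r ≤ r'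

/-- `B` encodes, for each non-pivotal index `i`, the row-echelon null vector
`b_i = e_i − v_i`: `(b_i)_i = 1`, `(b_i)_j = −α_j` for pivotal `j < i` where
`A_{*i} = Σ α_j A_{*j}`, and all other entries vanish.  Equivalently, `b_i ∈ ker A`,
`(b_i)_i = 1` and `(b_i)_j = 0` unless `j = i` or `j` is pivotal with `j < i`. -/
def IsEchelonNull {K : Type*} [Field K] {m N : ℕ} (A : Matrix (Fin m) (Fin N) K)
    (B : Fin N → Fin N → K) : Prop :=
  ∀ i : Fin N, ¬ Pivotal A i →
    A.mulVec (B i) = 0 ∧ B i i = 1 ∧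
    ∀ j : Fin N, j ≠ i → ¬ (Pivotal A j ∧ j < i) → B i j = 0

/-- Shift an index by `t`, modulo the size (used only when `j + t` is in range). -/
def shiftIdx {N : ℕ} (j : Fin N) (t : ℕ) : Fin N :=
  ⟨((j:ℕ) + t) % N, Nat.mod_lt _ j.pos⟩
section Part0
variable {K : Type*} [Field K] {n d : ℕ}

lemma idx_lt (i : Fin n) {j : ℕ} (hj : j < d + 1) : (i:ℕ) + j*n < n*(d+1) :=
  calc (i:ℕ) + j*n < n + j*n := Nat.add_lt_add_right i.isLt _
    _ = n * (j+1) := by ring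
    _ ≤ n * (d+1) := Nat.mul_le_mul le_rfl hj

lemma flatv_coeff (v : Fin (n*(d+1)) → K) (i : Fin n) {j : ℕ} (hj : j < d + 1) :
    (flatv d v i).coeff j = v ⟨(i:ℕ) + j*n, idx_lt i hj⟩ := by
  unfold flatv
  rw [Polynomial.finset_sum_coeff]
  rw [Finset.sum_eq_single (⟨j, hj⟩ : Fin (d+1))]
  · simp [Polynomial.coeff_C_mul, Polynomial.coeff_X_pow]
  · intro b _ hb
    have : j ≠ (b:ℕ) := by
      intro h; apply hb; apply Fin.ext; simp [← h]
    simp [Polynomial.coeff_C_mul, Polynomial.coeff_X_pow, this]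
  · intro h; exact absurd (Finset.mem_univ _) h

lemma flatv_natDegree_le (v : Fin (n*(d+1)) → K) (i : Fin n) :
    (flatv d v i).natDegree ≤ d := by
  unfold flatv
  apply Polynomial.natDegree_sum_le_of_forall_le
  intro j _
  apply le_trans (Polynomial.natDegree_C_mul_le _ _)
  simp [Polynomial.natDegree_X_pow]
  exact Nat.lt_succ_iff.mp j.isLt

lemma flatv_coeff_hi (v : Fin (n*(d+1)) → K) (i : Fin n) {j : ℕ} (hj : d < j) :
    (flatv d v i).coeff j = 0 :=
  Polynomial.coeff_eq_zero_of_natDegree_lt (lt_of_le_of_lt (flatv_natDegree_le v i) hj)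

lemma flatv_inj (v w : Fin (n*(d+1)) → K) (h0 : 0 < n) (h : flatv d v = flatv d w) : v = w := by
  funext ℓ
  have hln : (ℓ:ℕ) % n < n := Nat.mod_lt _ h0
  have hld : (ℓ:ℕ) / n < d + 1 := Nat.div_lt_of_lt_mul ℓ.isLt
  have := congrFun h ⟨(ℓ:ℕ) % n, hln⟩
  have h2 := congrArg (fun p => Polynomial.coeff p ((ℓ:ℕ)/n)) this
  rw [flatv_coeff v _ hld, flatv_coeff w _ hld] at h2
  have he : (ℓ:ℕ) % n + (ℓ:ℕ)/n * n = (ℓ:ℕ) := Nat.mod_add_div' _ _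
  have hle : (⟨(ℓ:ℕ) % n + (ℓ:ℕ)/n * n, idx_lt ⟨(ℓ:ℕ) % n, hln⟩ hld⟩ : Fin (n*(d+1))) = ℓ := Fin.ext he
  rwa [hle] at h2

/-- flatv as a linear map over K. -/
def flatvL (K : Type*) [Field K] (n d : ℕ) : (Fin (n*(d+1)) → K) →ₗ[K] (Fin n → K[X]) where
  toFun := flatv d
  map_add' v w := by
    funext i
    simp only [flatv, Pi.add_apply, map_add, add_mul, Finset.sum_add_distrib]
  map_smul' c v := by
    funext i
    simp only [flatv, Pi.smul_apply, smul_eq_mul, map_mul, RingHom.id_apply,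
      Polynomial.smul_eq_C_mul, Finset.mul_sum]
    exact Finset.sum_congr rfl fun j _ => by ring

lemma flatv_eq_self (h0 : 0 < n) (h : Fin n → K[X]) (hdeg : ∀ i, (h i).natDegree ≤ d) :
    flatv d (fun ℓ : Fin (n*(d+1)) => (h ⟨(ℓ:ℕ) % n, Nat.mod_lt _ h0⟩).coeff ((ℓ:ℕ)/n)) = h := by
  funext i
  apply Polynomial.ext
  intro j
  by_cases hj : j < d + 1
  · rw [flatv_coeff _ _ hj]
    simp only
    have : (⟨((i:ℕ) + j * n) % n, Nat.mod_lt _ h0⟩ : Fin n) = i := by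
      apply Fin.ext
      simp [Nat.add_mul_mod_self_right, Nat.mod_eq_of_lt i.isLt]
    rw [this]
    congr 1
    · rw [Nat.add_mul_div_right _ _ h0, Nat.div_eq_of_lt i.isLt, zero_add]
  · rw [flatv_coeff_hi _ _ (by omega)]
    exact (Polynomial.coeff_eq_zero_of_natDegree_lt (lt_of_le_of_lt (hdeg i) (by omega))).symm

lemma flat1_coeff {m : ℕ} (w : Fin m → K) (k : ℕ) :
    (flat1 w).coeff k = if h : k < m then w ⟨k, h⟩ else 0 := by
  unfold flat1
  rw [Polynomial.finset_sum_coeff]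
  by_cases h : k < m
  · rw [dif_pos h, Finset.sum_eq_single (⟨k, h⟩ : Fin m)]
    · simp [Polynomial.coeff_C_mul, Polynomial.coeff_X_pow]
    · intro b _ hb
      have hne : k ≠ (b:ℕ) := by
        intro he; apply hb; apply Fin.ext; simp [← he]
      simp [Polynomial.coeff_C_mul, Polynomial.coeff_X_pow, hne]
    · intro hk; exact absurd (Finset.mem_univ _) hk
  · rw [dif_neg h]
    apply Finset.sum_eq_zero
    intro b _
    have : k ≠ (b:ℕ) := fun he => h (he ▸ b.isLt)
    simp [Polynomial.coeff_C_mul, Polynomial.coeff_X_pow, this]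

lemma flat1_eq_zero_iff {m : ℕ} (w : Fin m → K) : flat1 w = 0 ↔ w = 0 := by
  constructor
  · intro h
    funext k
    have := congrArg (fun p => Polynomial.coeff p (k:ℕ)) h
    simp only [Polynomial.coeff_zero] at this
    rw [flat1_coeff, dif_pos k.isLt] at this
    simpa using this
  · intro h; subst h; unfold flat1; simp

/-- flat1 as a linear map over K. -/
def flat1L (K : Type*) [Field K] (m : ℕ) : (Fin m → K) →ₗ[K] K[X] where
  toFun := flat1
  map_add' v w := by
    simp only [flat1, Pi.add_apply, map_add, add_mul, Finset.sum_add_distrib]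
  map_smul' c v := by
    simp only [flat1, Pi.smul_apply, smul_eq_mul, map_mul, RingHom.id_apply,
      Polynomial.smul_eq_C_mul, Finset.mul_sum]
    exact Finset.sum_congr rfl fun j _ => by ring

lemma flat1L_injective {m : ℕ} : Function.Injective (flat1L K m) := by
  intro v w h
  have : flat1 (v - w) = 0 := by
    have h2 := map_sub (flat1L K m) v w
    rw [h, sub_self] at h2
    exact h2
  have := (flat1_eq_zero_iff _).mp this
  exact sub_eq_zero.mp this

end Part0
section PartA
variable {K : Type*} [Field K] {n d : ℕ}

/-- The polynomial attached to column `ℓ`: `a_{ℓ%n} * X^{ℓ/n}`. -/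
def pcol (h0 : 0 < n) (a : Fin n → K[X]) (d : ℕ) (ℓ : Fin (n*(d+1))) : K[X] :=
  a ⟨(ℓ:ℕ) % n, Nat.mod_lt _ h0⟩ * X ^ ((ℓ:ℕ) / n)

lemma blk_le (ℓ : Fin (n*(d+1))) : (ℓ:ℕ) / n ≤ d :=
  Nat.lt_succ_iff.mp (Nat.div_lt_of_lt_mul ℓ.isLt)

lemma flat1_col (h0 : 0 < n) (a : Fin n → K[X]) (hda : ∀ i, (a i).natDegree ≤ d)
    (ℓ : Fin (n*(d+1))) :
    flat1 (fun k : Fin (2*d+1) => coefA d h0 a k ℓ) = pcol h0 a d ℓ := by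
  apply Polynomial.ext
  intro k
  rw [flat1_coeff]
  unfold pcol
  rw [Polynomial.coeff_mul_X_pow']
  by_cases hk : k < 2*d+1
  · rw [dif_pos hk]
    simp only [coefA, Matrix.of_apply]
  · rw [dif_neg hk]
    by_cases hb : (ℓ:ℕ)/n ≤ k
    · rw [if_pos hb]
      symm
      apply Polynomial.coeff_eq_zero_of_natDegree_lt
      have h1 : (ℓ:ℕ)/n ≤ d := blk_le ℓ
      have : d < k - (ℓ:ℕ)/n := by omega
      exact lt_of_le_of_lt (hda _) this
    · rw [if_neg hb]

/-- The block equivalence `Fin n × Fin (d+1) ≃ Fin (n*(d+1))`. -/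
def blockEquiv (h0 : 0 < n) (d : ℕ) : Fin n × Fin (d+1) ≃ Fin (n*(d+1)) where
  toFun p := ⟨(p.1:ℕ) + (p.2:ℕ)*n, idx_lt p.1 p.2.isLt⟩
  invFun ℓ := (⟨(ℓ:ℕ)%n, Nat.mod_lt _ h0⟩, ⟨(ℓ:ℕ)/n, Nat.div_lt_of_lt_mul ℓ.isLt⟩)
  left_inv p := by
    ext
    · simp [Nat.add_mul_mod_self_right, Nat.mod_eq_of_lt p.1.isLt]
    · simp [Nat.add_mul_div_right _ _ h0, Nat.div_eq_of_lt p.1.isLt]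
  right_inv ℓ := by
    apply Fin.ext
    exact Nat.mod_add_div' _ _

lemma sum_pcol_eq (h0 : 0 < n) (a : Fin n → K[X]) (v : Fin (n*(d+1)) → K) :
    ∑ ℓ : Fin (n*(d+1)), v ℓ • pcol h0 a d ℓ = ∑ i, a i * flatv d v i := by
  rw [← Equiv.sum_comp (blockEquiv h0 d) (fun ℓ => v ℓ • pcol h0 a d ℓ)]
  rw [Fintype.sum_prod_type]
  apply Finset.sum_congr rfl
  intro i _
  unfold flatv
  rw [Finset.mul_sum]
  apply Finset.sum_congr rfl
  intro j _
  simp only [blockEquiv, Equiv.coe_fn_mk, pcol]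
  have h1 : ((i:ℕ) + (j:ℕ)*n) % n = (i:ℕ) := by
    simp [Nat.add_mul_mod_self_right, Nat.mod_eq_of_lt i.isLt]
  have h2 : ((i:ℕ) + (j:ℕ)*n) / n = (j:ℕ) := by
    simp [Nat.add_mul_div_right _ _ h0, Nat.div_eq_of_lt i.isLt]
  simp only [h1, h2, Polynomial.smul_eq_C_mul]
  have : (⟨(i:ℕ), by omega⟩ : Fin n) = i := rfl
  rw [this]
  ring

lemma mulVec_as_sum (h0 : 0 < n) (a : Fin n → K[X]) {A : Matrix (Fin (2*d+1)) (Fin (n*(d+1))) K}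
    (hA : A = coefA d h0 a) (hda : ∀ i, (a i).natDegree ≤ d) (v : Fin (n*(d+1)) → K) :
    flat1 (A.mulVec v) = ∑ i, a i * flatv d v i := by
  have h1 : A.mulVec v = ∑ ℓ : Fin (n*(d+1)), v ℓ • (fun k => A k ℓ) := by
    funext k
    rw [Finset.sum_apply]
    simp only [Pi.smul_apply, smul_eq_mul]
    unfold Matrix.mulVec dotProduct
    exact Finset.sum_congr rfl fun ℓ _ => mul_comm _ _
  have h2 : flat1 (A.mulVec v) = flat1L K (2*d+1) (A.mulVec v) := rfl
  rw [h2, h1, map_sum]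
  rw [← sum_pcol_eq h0 a v]
  apply Finset.sum_congr rfl
  intro ℓ _
  rw [map_smul]
  have : flat1L K (2*d+1) (fun k => A k ℓ) = pcol h0 a d ℓ := by
    subst hA; exact flat1_col h0 a hda ℓ
  rw [this]

lemma mem_syz_iff {a h : Fin n → K[X]} : h ∈ syz a ↔ ∑ i, a i * h i = 0 := Iff.rfl

lemma ker_iff (h0 : 0 < n) (a : Fin n → K[X]) {A : Matrix (Fin (2*d+1)) (Fin (n*(d+1))) K}
    (hA : A = coefA d h0 a) (hda : ∀ i, (a i).natDegree ≤ d) (v : Fin (n*(d+1)) → K) :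
    A.mulVec v = 0 ↔ flatv d v ∈ syz a := by
  rw [mem_syz_iff, ← mulVec_as_sum h0 a hA hda v]
  constructor
  · intro h; rw [h]; unfold flat1; simp
  · intro h
    have := (flat1_eq_zero_iff (A.mulVec v)).mp h
    exact this

/-- Pivotality in polynomial terms. -/
lemma pivotal_iff (h0 : 0 < n) (a : Fin n → K[X]) {A : Matrix (Fin (2*d+1)) (Fin (n*(d+1))) K}
    (hA : A = coefA d h0 a) (hda : ∀ i, (a i).natDegree ≤ d) (ℓ : Fin (n*(d+1))) :
    Pivotal A ℓ ↔ pcol h0 a d ℓ ∉ Submodule.span K (pcol h0 a d '' {r | r < ℓ}) := by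
  unfold Pivotal
  have himg : pcol h0 a d '' {r | r < ℓ} =
      (flat1L K (2*d+1)) '' ((fun r : Fin (n*(d+1)) => fun k => A k r) '' {r | r < ℓ}) := by
    rw [Set.image_image]
    apply Set.image_congr
    intro r _
    subst hA
    exact (flat1_col h0 a hda r).symm
  have hc : pcol h0 a d ℓ = flat1L K (2*d+1) (fun k => A k ℓ) := by
    subst hA; exact (flat1_col h0 a hda ℓ).symm
  rw [himg, hc]
  rw [Submodule.apply_mem_span_image_iff_mem_span flat1L_injective]

end PartA
section PartB
variable {K : Type*} [Field K] {m N : ℕ}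

lemma mulVec_eq_sum_cols (A : Matrix (Fin m) (Fin N) K) (w : Fin N → K) :
    A.mulVec w = ∑ ℓ : Fin N, w ℓ • (fun k => A k ℓ) := by
  funext k
  rw [Finset.sum_apply]
  simp only [Pi.smul_apply, smul_eq_mul]
  unfold Matrix.mulVec dotProduct
  exact Finset.sum_congr rfl fun ℓ _ => mul_comm _ _

/-- A vector supported on pivotal indices in the kernel of `A` is zero. -/
lemma piv_indep (A : Matrix (Fin m) (Fin N) K) (w : Fin N → K)
    (hsupp : ∀ j, ¬ Pivotal A j → w j = 0) (hker : A.mulVec w = 0) : w = 0 := by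
  by_contra hw
  set S : Finset (Fin N) := Finset.univ.filter (fun ℓ => w ℓ ≠ 0) with hS
  have hSne : S.Nonempty := by
    rw [Finset.filter_nonempty_iff]
    push_neg at hw
    obtain ⟨ℓ, hℓ⟩ := Function.ne_iff.mp hw
    exact ⟨ℓ, Finset.mem_univ _, hℓ⟩
  set M := S.max' hSne with hM
  have hMS : M ∈ S := S.max'_mem hSne
  have hwM : w M ≠ 0 := (Finset.mem_filter.mp hMS).2
  have hMpiv : Pivotal A M := by
    by_contra h
    exact hwM (hsupp M h)
  apply hMpiv
  -- col M ∈ span of earlier columns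
  have hsum : ∑ ℓ : Fin N, w ℓ • (fun k => A k ℓ) = 0 := by
    rw [← mulVec_eq_sum_cols]; exact hker
  have hsum2 : ∑ ℓ ∈ S, w ℓ • (fun k => A k ℓ) = 0 := by
    rw [← hsum]
    refine (Finset.sum_subset (f := fun ℓ => w ℓ • (fun k => A k ℓ)) (Finset.subset_univ S) ?_)
    intro x _ hx
    have : w x = 0 := by
      by_contra h
      exact hx (Finset.mem_filter.mpr ⟨Finset.mem_univ _, h⟩)
    simp only [this, zero_smul]
  have hsplit : w M • (fun k => A k M) + ∑ ℓ ∈ S.erase M, w ℓ • (fun k => A k ℓ) = 0 := by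
    rw [← Finset.add_sum_erase S (fun ℓ => w ℓ • (fun k => A k ℓ)) hMS] at hsum2
    exact hsum2
  have hcol : (fun k => A k M) = (w M)⁻¹ • -∑ ℓ ∈ S.erase M, w ℓ • (fun k => A k ℓ) := by
    have h1 : w M • (fun k => A k M) = -∑ ℓ ∈ S.erase M, w ℓ • (fun k => A k ℓ) := by
      rw [eq_neg_iff_add_eq_zero]; exact hsplit
    have := congrArg (fun x => (w M)⁻¹ • x) h1
    simp only [smul_smul, inv_mul_cancel₀ hwM, one_smul] at this
    exact this
  rw [hcol]
  apply Submodule.smul_mem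
  apply Submodule.neg_mem
  apply Submodule.sum_mem
  intro ℓ hℓ
  apply Submodule.smul_mem
  apply Submodule.subset_span
  apply Set.mem_image_of_mem
  have hℓS := Finset.mem_of_mem_erase hℓ
  have hne := Finset.ne_of_mem_erase hℓ
  exact lt_of_le_of_ne (S.le_max' _ hℓS) hne

variable {A : Matrix (Fin m) (Fin N) K} {B : Fin N → Fin N → K}

lemma B_gt_zero (hB : IsEchelonNull A B) {i j : Fin N} (hi : ¬ Pivotal A i) (hij : i < j) :
    B i j = 0 := by
  obtain ⟨-, -, h3⟩ := hB i hi
  exact h3 j (ne_of_gt hij) (fun ⟨_, hlt⟩ => absurd hij (not_lt.mpr (le_of_lt hlt)))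

lemma B_nonpiv_zero (hB : IsEchelonNull A B) {i j : Fin N} (hi : ¬ Pivotal A i)
    (hj : ¬ Pivotal A j) (hij : j ≠ i) : B i j = 0 := by
  obtain ⟨-, -, h3⟩ := hB i hi
  exact h3 j hij (fun ⟨hp, _⟩ => hj hp)

lemma ker_expand (hB : IsEchelonNull A B) (v : Fin N → K) (hv : A.mulVec v = 0) :
    v = ∑ r ∈ Finset.univ.filter (fun r => ¬ Pivotal A r), v r • B r := by
  set Q := Finset.univ.filter (fun r => ¬ Pivotal A r) with hQ
  set w : Fin N → K := v - ∑ r ∈ Q, v r • B r with hw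
  have hker : A.mulVec w = 0 := by
    have h1 : A.mulVec w = A.mulVec v - ∑ r ∈ Q, v r • A.mulVec (B r) := by
      rw [hw]
      rw [show A.mulVec (v - ∑ r ∈ Q, v r • B r)
          = A.mulVecLin (v - ∑ r ∈ Q, v r • B r) from rfl]
      rw [map_sub, map_sum]
      simp only [map_smul]
      rfl
    rw [h1, hv]
    have : ∀ r ∈ Q, v r • A.mulVec (B r) = 0 := by
      intro r hr
      have hnp : ¬ Pivotal A r := (Finset.mem_filter.mp hr).2
      rw [(hB r hnp).1, smul_zero]
    rw [Finset.sum_congr rfl this]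
    simp
  have hsupp : ∀ j, ¬ Pivotal A j → w j = 0 := by
    intro j hj
    have hjQ : j ∈ Q := Finset.mem_filter.mpr ⟨Finset.mem_univ _, hj⟩
    rw [hw]
    simp only [Pi.sub_apply, Finset.sum_apply, Pi.smul_apply, smul_eq_mul]
    rw [Finset.sum_eq_single j]
    · rw [(hB j hj).2.1, mul_one, sub_self]
    · intro r hr hrj
      have hnp : ¬ Pivotal A r := (Finset.mem_filter.mp hr).2
      rw [B_nonpiv_zero hB hnp hj hrj.symm, mul_zero]  -- careful direction
    · intro h; exact absurd hjQ h
  have h9 := piv_indep A w hsupp hker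
  rw [hw] at h9
  exact sub_eq_zero.mp h9

end PartB
section PartC

lemma nat_step {n r r' : ℕ} (h0 : 0 < n) (h2 : r' % n = r % n) (h3 : r' < r) :
    n ≤ r ∧ ∃ k, r' + k * n = r - n := by
  obtain ⟨Q, hQ⟩ : ∃ Q, r / n = Q := ⟨_, rfl⟩
  obtain ⟨Q', hQ'⟩ : ∃ Q', r' / n = Q' := ⟨_, rfl⟩
  have e1 := Nat.div_add_mod r n
  have e2 := Nat.div_add_mod r' n
  rw [hQ] at e1
  rw [hQ'] at e2
  obtain ⟨k, hk⟩ : ∃ k, k = Q - 1 - Q' := ⟨_, rfl⟩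
  have hq : Q' < Q := by
    rcases Nat.lt_or_ge Q' Q with h|h
    · exact h
    · exfalso
      have : n * Q ≤ n * Q' := Nat.mul_le_mul_left n h
      omega
  have hn1 : n * 1 ≤ n * Q := Nat.mul_le_mul_left n (by omega)
  have hnr : n ≤ r := by omega
  refine ⟨hnr, ⟨k, ?_⟩⟩
  have m3 : (k + Q' + 1) * n = Q * n := by
    congr 1
    omega
  have m4 : (k + Q' + 1)*n = k*n + Q'*n + n := by
    rw [Nat.add_mul, Nat.add_mul, one_mul]
  have m1 : n * Q = Q * n := mul_comm _ _
  have m2 : n * Q' = Q' * n := mul_comm _ _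
  omega

variable {K : Type*} [Field K] {n d : ℕ}

lemma pcol_shift (h0 : 0 < n) (a : Fin n → K[X]) {ℓ : Fin (n*(d+1))}
    (h : (ℓ:ℕ) + n < n*(d+1)) :
    pcol h0 a d ⟨(ℓ:ℕ) + n, h⟩ = X * pcol h0 a d ℓ := by
  unfold pcol
  have h1 : ((ℓ:ℕ) + n) % n = (ℓ:ℕ) % n := Nat.add_mod_right _ _
  have h2 : ((ℓ:ℕ) + n) / n = (ℓ:ℕ)/n + 1 := Nat.add_div_right _ h0
  simp only [h1, h2]
  rw [pow_succ]
  ring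

lemma shift_nonpiv (h0 : 0 < n) (a : Fin n → K[X])
    {A : Matrix (Fin (2*d+1)) (Fin (n*(d+1))) K} (hA : A = coefA d h0 a)
    (hda : ∀ i, (a i).natDegree ≤ d) {ℓ : Fin (n*(d+1))} (h : (ℓ:ℕ) + n < n*(d+1))
    (hnp : ¬ Pivotal A ℓ) : ¬ Pivotal A ⟨(ℓ:ℕ) + n, h⟩ := by
  rw [pivotal_iff h0 a hA hda] at hnp ⊢
  rw [not_not] at hnp ⊢
  set f : K[X] →ₗ[K] K[X] := LinearMap.mulLeft K (X : K[X]) with hf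
  have h1 : f (pcol h0 a d ℓ) ∈ Submodule.span K (f '' (pcol h0 a d '' {r | r < ℓ})) :=
    Submodule.apply_mem_span_image_of_mem_span f hnp
  have h2 : pcol h0 a d ⟨(ℓ:ℕ) + n, h⟩ = f (pcol h0 a d ℓ) := by
    rw [hf]; exact pcol_shift h0 a h
  rw [h2]
  refine Submodule.span_mono ?_ h1
  rintro x ⟨y, ⟨r, hr, rfl⟩, rfl⟩
  have hrn : (r:ℕ) + n < n*(d+1) := by
    have : (r:ℕ) < (ℓ:ℕ) := hr
    omega
  refine ⟨⟨(r:ℕ) + n, hrn⟩, ?_, ?_⟩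
  · show ((r:ℕ) + n) < (ℓ:ℕ) + n
    have : (r:ℕ) < (ℓ:ℕ) := hr
    omega
  · rw [pcol_shift h0 a hrn]; rfl

lemma class_up (h0 : 0 < n) (a : Fin n → K[X])
    {A : Matrix (Fin (2*d+1)) (Fin (n*(d+1))) K} (hA : A = coefA d h0 a)
    (hda : ∀ i, (a i).natDegree ≤ d) {r : Fin (n*(d+1))} (hnp : ¬ Pivotal A r)
    (k : ℕ) (h : (r:ℕ) + k*n < n*(d+1)) : ¬ Pivotal A ⟨(r:ℕ) + k*n, h⟩ := by
  induction k with
  | zero =>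
    have : (⟨(r:ℕ) + 0*n, h⟩ : Fin (n*(d+1))) = r := Fin.ext (by simp)
    rw [this]; exact hnp
  | succ k ih =>
    have hk : (r:ℕ) + k*n < n*(d+1) := by
      have : (r:ℕ) + (k+1)*n = (r:ℕ) + k*n + n := by ring
      omega
    have h2 : (r:ℕ) + k*n + n < n*(d+1) := by
      have : (r:ℕ) + (k+1)*n = (r:ℕ) + k*n + n := by ring
      omega
    have := shift_nonpiv h0 a hA hda (ℓ := ⟨(r:ℕ) + k*n, hk⟩) h2 (ih hk)
    have he : (⟨(r:ℕ) + k*n + n, h2⟩ : Fin (n*(d+1))) = ⟨(r:ℕ) + (k+1)*n, h⟩ :=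
      Fin.ext (by push_cast; ring)
    rwa [he] at this

lemma not_basic_iff {A : Matrix (Fin (2*d+1)) (Fin (n*(d+1))) K}
    {r : Fin (n*(d+1))} (hnp : ¬ Pivotal A r) :
    ¬ BasicNP n A r ↔ ∃ r', ¬ Pivotal A r' ∧ (r':ℕ) % n = (r:ℕ) % n ∧ r' < r := by
  unfold BasicNP
  constructor
  · intro h
    push_neg at h
    obtain ⟨r', h1, h2, h3⟩ := h hnp
    exact ⟨r', h1, h2, h3⟩
  · rintro ⟨r', h1, h2, h3⟩ ⟨-, h5⟩
    exact absurd (h5 r' h1 h2) (not_le.mpr h3)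

lemma nonbasic_step (h0 : 0 < n) (a : Fin n → K[X])
    {A : Matrix (Fin (2*d+1)) (Fin (n*(d+1))) K} (hA : A = coefA d h0 a)
    (hda : ∀ i, (a i).natDegree ≤ d) {r : Fin (n*(d+1))} (hnp : ¬ Pivotal A r)
    (hnb : ¬ BasicNP n A r) :
    ∃ (h : n ≤ (r:ℕ)), ¬ Pivotal A ⟨(r:ℕ) - n, lt_of_le_of_lt (Nat.sub_le _ _) r.isLt⟩ := by
  obtain ⟨r', h1, h2, h3⟩ := (not_basic_iff hnp).mp hnb
  obtain ⟨hrn, k, hk⟩ := nat_step (Nat.lt_of_lt_of_le Nat.zero_lt_one (by omega) : 0 < n) h2 h3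
  have hlt2 : (r':ℕ) + k*n < n*(d+1) := by
    have := r.isLt; omega
  have hcu := class_up h0 a hA hda h1 k hlt2
  refine ⟨hrn, ?_⟩
  have he : (⟨(r':ℕ) + k*n, hlt2⟩ : Fin (n*(d+1)))
      = ⟨(r:ℕ) - n, lt_of_le_of_lt (Nat.sub_le _ _) r.isLt⟩ := Fin.ext hk
  rwa [he] at hcu

/-- Every non-pivotal index has a basic non-pivotal index in its residue class. -/
lemma exists_basic {A : Matrix (Fin (2*d+1)) (Fin (n*(d+1))) K}
    {r : Fin (n*(d+1))} (hnp : ¬ Pivotal A r) :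
    ∃ rb : Fin (n*(d+1)), BasicNP n A rb ∧ (rb:ℕ) % n = (r:ℕ) % n := by
  classical
  set S : Finset (Fin (n*(d+1))) :=
    Finset.univ.filter (fun r' => ¬ Pivotal A r' ∧ (r':ℕ) % n = (r:ℕ) % n) with hS
  have hSne : S.Nonempty := ⟨r, Finset.mem_filter.mpr ⟨Finset.mem_univ _, hnp, rfl⟩⟩
  set M := S.min' hSne with hM
  have hMS : M ∈ S := S.min'_mem hSne
  obtain ⟨-, hM1, hM2⟩ := Finset.mem_filter.mp hMS
  refine ⟨M, ⟨hM1, ?_⟩, hM2⟩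
  intro r'' h1 h2
  apply S.min'_le
  exact Finset.mem_filter.mpr ⟨Finset.mem_univ _, h1, by rw [h2, hM2]⟩

end PartC
section PartD
variable {K : Type*} [Field K] {n d : ℕ}
variable {A : Matrix (Fin (2*d+1)) (Fin (n*(d+1))) K} {B : Fin (n*(d+1)) → Fin (n*(d+1)) → K}

lemma npos (r : Fin (n*(d+1))) : 0 < n := by
  rcases Nat.eq_zero_or_pos n with h|h
  · subst h; exact absurd r.isLt (by simp)
  · exact h

lemma u_natDegree_le (hB : IsEchelonNull A B) {r : Fin (n*(d+1))} (hnp : ¬ Pivotal A r)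
    (i : Fin n) : (flatv d (B r) i).natDegree ≤ (r:ℕ)/n := by
  rw [Polynomial.natDegree_le_iff_coeff_eq_zero]
  intro k hk
  by_cases hkd : k < d + 1
  · rw [flatv_coeff _ _ hkd]
    apply B_gt_zero hB hnp
    show (r:ℕ) < (i:ℕ) + k*n
    obtain ⟨Q, hQ⟩ : ∃ Q, (r:ℕ)/n = Q := ⟨_, rfl⟩
    have e1 := Nat.mod_add_div' (r:ℕ) n
    rw [hQ] at e1 hk
    have h1 : (Q+1)*n ≤ k*n := Nat.mul_le_mul_right n (by omega)
    have h2 : (Q+1)*n = Q*n + n := by rw [Nat.add_mul, one_mul]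
    have h4 : (r:ℕ) % n < n := Nat.mod_lt _ (npos r)
    omega
  · exact flatv_coeff_hi _ _ (by omega)

lemma modidx_lt (r : Fin (n*(d+1))) : (r:ℕ) % n + ((r:ℕ)/n)*n < n*(d+1) := by
  have := Nat.mod_add_div' (r:ℕ) n
  have := r.isLt
  omega

lemma u_vdeg (hB : IsEchelonNull A B) {r : Fin (n*(d+1))} (hnp : ¬ Pivotal A r) :
    vdeg (flatv d (B r)) = (r:ℕ)/n := by
  have h0 : 0 < n := npos r
  apply le_antisymm
  · exact Finset.sup_le (fun i _ => u_natDegree_le hB hnp i)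
  · have hi : (r:ℕ) % n < n := Nat.mod_lt _ h0
    have hcoeff : (flatv d (B r) ⟨(r:ℕ) % n, hi⟩).coeff ((r:ℕ)/n) = 1 := by
      rw [flatv_coeff _ _ (Nat.lt_succ_iff.mpr (blk_le r))]
      have he : (⟨(r:ℕ) % n + ((r:ℕ)/n)*n, modidx_lt r⟩ : Fin (n*(d+1))) = r :=
        Fin.ext (Nat.mod_add_div' _ _)
      rw [show (⟨((⟨(r:ℕ) % n, hi⟩ : Fin n) : ℕ) + ((r:ℕ)/n)*n,
          idx_lt ⟨(r:ℕ) % n, hi⟩ (Nat.lt_succ_iff.mpr (blk_le r))⟩ : Fin (n*(d+1))) = r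
        from Fin.ext (Nat.mod_add_div' _ _)]
      exact (hB r hnp).2.1
    have h5 : (r:ℕ)/n ≤ (flatv d (B r) ⟨(r:ℕ) % n, hi⟩).natDegree := by
      apply Polynomial.le_natDegree_of_ne_zero
      rw [hcoeff]; exact one_ne_zero
    exact le_trans h5 (Finset.le_sup (f := fun i => (flatv d (B r) i).natDegree)
      (Finset.mem_univ _))

lemma u_LV_apply (hB : IsEchelonNull A B) {r : Fin (n*(d+1))} (hnp : ¬ Pivotal A r)
    (i : Fin n) :
    LV (flatv d (B r)) i = B r ⟨(i:ℕ) + ((r:ℕ)/n)*n, idx_lt i (Nat.lt_succ_iff.mpr (blk_le r))⟩ := by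
  unfold LV
  rw [u_vdeg hB hnp, flatv_coeff _ _ (Nat.lt_succ_iff.mpr (blk_le r))]

lemma u_LV_diag (hB : IsEchelonNull A B) {r : Fin (n*(d+1))} (hnp : ¬ Pivotal A r)
    (h0 : 0 < n) :
    LV (flatv d (B r)) ⟨(r:ℕ) % n, Nat.mod_lt _ h0⟩ = 1 := by
  rw [u_LV_apply hB hnp]
  rw [show (⟨((⟨(r:ℕ) % n, Nat.mod_lt _ h0⟩ : Fin n) : ℕ) + ((r:ℕ)/n)*n,
      idx_lt ⟨(r:ℕ) % n, Nat.mod_lt _ h0⟩ (Nat.lt_succ_iff.mpr (blk_le r))⟩ : Fin (n*(d+1))) = r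
    from Fin.ext (Nat.mod_add_div' _ _)]
  exact (hB r hnp).2.1

lemma u_LV_upper (hB : IsEchelonNull A B) {r : Fin (n*(d+1))} (hnp : ¬ Pivotal A r)
    {i : Fin n} (hi : (r:ℕ) % n < (i:ℕ)) :
    LV (flatv d (B r)) i = 0 := by
  rw [u_LV_apply hB hnp]
  apply B_gt_zero hB hnp
  show (r:ℕ) < (i:ℕ) + ((r:ℕ)/n)*n
  have e1 := Nat.mod_add_div' (r:ℕ) n
  omega

end PartD
section PartE
variable {K : Type*} [Field K] {n : ℕ}

/-- Vectors with an "echelon" zero pattern are linearly independent. -/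
lemma echelon_indep {ι : Type*} [Fintype ι] (v : ι → Fin n → K) (π : ι → Fin n)
    (hinj : Function.Injective π) (hd : ∀ r, v r (π r) ≠ 0)
    (hup : ∀ r i, π r < i → v r i = 0) : LinearIndependent K v := by
  rw [Fintype.linearIndependent_iff]
  intro g hsum
  by_contra hg
  push_neg at hg
  obtain ⟨r0, hr0⟩ := hg
  set S : Finset ι := Finset.univ.filter (fun r => g r ≠ 0) with hS
  have hSne : S.Nonempty := ⟨r0, Finset.mem_filter.mpr ⟨Finset.mem_univ _, hr0⟩⟩
  obtain ⟨rm, hrmS, hrm⟩ := Finset.exists_max_image S π hSne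
  have hgrm : g rm ≠ 0 := (Finset.mem_filter.mp hrmS).2
  have := congrFun hsum (π rm)
  rw [Finset.sum_apply] at this
  simp only [Pi.smul_apply, smul_eq_mul, Pi.zero_apply] at this
  rw [Finset.sum_eq_single rm] at this
  · exact hgrm (by
      rcases mul_eq_zero.mp this with h|h
      · exact h
      · exact absurd h (hd rm))
  · intro b _ hb
    by_cases hgb : g b = 0
    · rw [hgb, zero_mul]
    · have hbS : b ∈ S := Finset.mem_filter.mpr ⟨Finset.mem_univ _, hgb⟩
      have h1 : π b ≤ π rm := hrm b hbS
      have h2 : π b ≠ π rm := fun he => hb (hinj he)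
      rw [hup b (π rm) (lt_of_le_of_ne h1 h2), mul_zero]
  · intro h; exact absurd (Finset.mem_univ _) h

lemma coeff_mul_top (p q : K[X]) (e1 e2 : ℕ) (h1 : p.natDegree ≤ e1) (h2 : q.natDegree ≤ e2) :
    (p*q).coeff (e1+e2) = p.coeff e1 * q.coeff e2 := by
  rw [Polynomial.coeff_mul]
  rw [Finset.sum_eq_single ((e1, e2) : ℕ × ℕ)]
  · intro b hb hbne
    have hab : b.1 + b.2 = e1 + e2 := Finset.HasAntidiagonal.mem_antidiagonal.mp hb
    by_cases hx : e1 < b.1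
    · rw [Polynomial.coeff_eq_zero_of_natDegree_lt (lt_of_le_of_lt h1 hx), zero_mul]
    · have hy : e2 < b.2 := by
        rcases Nat.lt_or_ge b.1 e1 with h|h
        · omega
        · exfalso; apply hbne
          have : b.1 = e1 := le_antisymm (not_lt.mp hx) h
          have : b.2 = e2 := by omega
          exact Prod.ext (by omega) this
      rw [Polynomial.coeff_eq_zero_of_natDegree_lt (lt_of_le_of_lt h2 hy), mul_zero]
  · intro h
    exact absurd ((Finset.HasAntidiagonal.mem_antidiagonal (n := e1+e2)).mpr rfl) h

lemma vdeg_entry_le (h : Fin n → K[X]) (i : Fin n) : (h i).natDegree ≤ vdeg h :=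
  Finset.le_sup (f := fun i => (h i).natDegree) (Finset.mem_univ i)

/-- A family of polynomial vectors whose leading vectors are `K`-linearly independent is
`K[X]`-linearly independent. -/
lemma poly_indep {ι : Type*} [Fintype ι] (v : ι → Fin n → K[X])
    (hLV : LinearIndependent K (fun r => LV (v r))) : LinearIndependent K[X] v := by
  rw [Fintype.linearIndependent_iff]
  intro g hsum
  by_contra hg
  push_neg at hg
  obtain ⟨r0, hr0⟩ := hg
  set S : Finset ι := Finset.univ.filter (fun r => g r ≠ 0) with hS
  have hSne : S.Nonempty := ⟨r0, Finset.mem_filter.mpr ⟨Finset.mem_univ _, hr0⟩⟩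
  set e : ℕ := S.sup (fun r => (g r).natDegree + vdeg (v r)) with he
  set T : Finset ι := S.filter (fun r => (g r).natDegree + vdeg (v r) = e) with hT
  have hTne : T.Nonempty := by
    obtain ⟨r, hrS, hr⟩ := Finset.exists_mem_eq_sup S hSne (fun r => (g r).natDegree + vdeg (v r))
    exact ⟨r, Finset.mem_filter.mpr ⟨hrS, hr.symm⟩⟩
  have key : ∀ i : Fin n, ∑ r ∈ T, (g r).leadingCoeff * LV (v r) i = 0 := by
    intro i
    have h1 := congrFun hsum i
    rw [Finset.sum_apply] at h1
    simp only [Pi.smul_apply, smul_eq_mul, Pi.zero_apply] at h1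
    have h2 := congrArg (fun p => Polynomial.coeff p e) h1
    simp only [Polynomial.finset_sum_coeff, Polynomial.coeff_zero] at h2
    have hA : ∑ b : ι, (g b * v b i).coeff e = ∑ r ∈ T, (g r * v r i).coeff e := by
      refine (Finset.sum_subset (Finset.subset_univ T) ?_).symm
      intro r _ hrT
      by_cases hgS : g r = 0
      · rw [hgS, zero_mul, Polynomial.coeff_zero]
      · have hrS : r ∈ S := Finset.mem_filter.mpr ⟨Finset.mem_univ _, hgS⟩
        have hne : (g r).natDegree + vdeg (v r) ≠ e := by
          intro hcon
          exact hrT (Finset.mem_filter.mpr ⟨hrS, hcon⟩)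
        have hle : (g r).natDegree + vdeg (v r) ≤ e := Finset.le_sup (f := fun r => (g r).natDegree + vdeg (v r)) hrS
        apply Polynomial.coeff_eq_zero_of_natDegree_lt
        calc (g r * v r i).natDegree ≤ (g r).natDegree + (v r i).natDegree :=
              Polynomial.natDegree_mul_le
          _ ≤ (g r).natDegree + vdeg (v r) := by
              have := vdeg_entry_le (v r) i; omega
          _ < e := by omega
    have hBt : ∑ r ∈ T, (g r * v r i).coeff e = ∑ r ∈ T, (g r).leadingCoeff * LV (v r) i := by
      apply Finset.sum_congr rfl
      intro r hr
      obtain ⟨hrS, hre⟩ := Finset.mem_filter.mp hr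
      rw [← hre]
      rw [coeff_mul_top _ _ _ _ le_rfl (vdeg_entry_le _ _)]
      rfl
    rw [← hBt, ← hA, h2]
  have hzero : ∀ r ∈ T, (g r).leadingCoeff = 0 := by
    have h3 : ∑ r ∈ T, (g r).leadingCoeff • (fun i => LV (v r) i) = 0 := by
      funext i
      rw [Finset.sum_apply]
      simp only [Pi.smul_apply, smul_eq_mul, Pi.zero_apply]
      exact key i
    exact linearIndependent_iff'.mp hLV T (fun r => (g r).leadingCoeff) h3
  obtain ⟨r, hrT⟩ := hTne
  have hgr : g r ≠ 0 := (Finset.mem_filter.mp ((Finset.filter_subset _ _) hrT)).2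
  exact hgr (Polynomial.leadingCoeff_eq_zero.mp (hzero r hrT))

end PartE
section PartF
variable {K : Type*} [Field K] {n d : ℕ}

lemma LVa_ne_zero (h0 : 0 < n) {a : Fin n → K[X]} (ha : a ≠ 0) : ∃ i, LV a i ≠ 0 := by
  have hne : (Finset.univ : Finset (Fin n)).Nonempty := ⟨⟨0, h0⟩, Finset.mem_univ _⟩
  obtain ⟨i, -, hi⟩ := Finset.exists_mem_eq_sup Finset.univ hne (fun i => (a i).natDegree)
  by_cases hai : a i = 0
  · have hd0 : vdeg a = 0 := by rw [show vdeg a = (a i).natDegree from hi, hai]; simp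
    obtain ⟨j, hj⟩ := Function.ne_iff.mp ha
    refine ⟨j, ?_⟩
    unfold LV
    rw [hd0]
    have hdj : (a j).natDegree = 0 := by
      have h1 : (a j).natDegree ≤ vdeg a := vdeg_entry_le a j
      omega
    rw [← hdj]
    exact Polynomial.leadingCoeff_ne_zero.mpr hj
  · refine ⟨i, ?_⟩
    unfold LV
    rw [show vdeg a = (a i).natDegree from hi]
    exact Polynomial.leadingCoeff_ne_zero.mpr hai

lemma syz_perp {a : Fin n → K[X]} {h : Fin n → K[X]} (hsyz : h ∈ syz a) :
    ∑ i, LV a i * LV h i = 0 := by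
  have h1 : ∑ i, a i * h i = 0 := hsyz
  have h2 := congrArg (fun p => Polynomial.coeff p (vdeg a + vdeg h)) h1
  simp only [Polynomial.finset_sum_coeff, Polynomial.coeff_zero] at h2
  rw [← h2]
  apply Finset.sum_congr rfl
  intro i _
  rw [coeff_mul_top _ _ _ _ (vdeg_entry_le a i) (vdeg_entry_le h i)]
  rfl

lemma hyperplane_span {ι : Type*} [Fintype ι] (hn : 1 < n)
    (f : (Fin n → K) →ₗ[K] K) (hf : f ≠ 0) (hcard : Fintype.card ι = n - 1)
    (w : ι → Fin n → K) (hind : LinearIndependent K w) (hker : ∀ r, f (w r) = 0)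
    {x : Fin n → K} (hx : f x = 0) : x ∈ Submodule.span K (Set.range w) := by
  have hle : Submodule.span K (Set.range w) ≤ LinearMap.ker f := by
    rw [Submodule.span_le]
    rintro y ⟨r, rfl⟩
    exact hker r
  have hsurj : Function.Surjective f := by
    obtain ⟨y, hy⟩ : ∃ y, f y ≠ 0 := by
      by_contra hc
      push_neg at hc
      exact hf (LinearMap.ext hc)
    intro c
    refine ⟨(c * (f y)⁻¹) • y, ?_⟩
    rw [map_smul, smul_eq_mul]
    field_simp
  have hrange : LinearMap.range f = ⊤ := LinearMap.range_eq_top.mpr hsurj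
  have hker_rank : Module.finrank K (LinearMap.ker f) = n - 1 := by
    have := LinearMap.finrank_range_add_finrank_ker f
    rw [hrange] at this
    have h2 : Module.finrank K (⊤ : Submodule K K) = 1 := by
      rw [finrank_top]; exact Module.finrank_self K
    rw [h2, Module.finrank_fin_fun] at this
    omega
  have hspan_rank : Module.finrank K (Submodule.span K (Set.range w)) = n - 1 := by
    rw [finrank_span_eq_card hind, hcard]
  have : Submodule.span K (Set.range w) = LinearMap.ker f := by
    apply Submodule.eq_of_le_of_finrank_le hle
    rw [hker_rank, hspan_rank]
  rw [this]
  exact hx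

end PartF
section PartG
variable {K : Type*} [Field K] {n d : ℕ}
variable {A : Matrix (Fin (2*d+1)) (Fin (n*(d+1))) K} {B : Fin (n*(d+1)) → Fin (n*(d+1)) → K}

/-- Each residue class has `d+1` column indices. -/
lemma class_card (h0 : 0 < n) (i : Fin n) :
    (Finset.univ.filter (fun r : Fin (n*(d+1)) => (r:ℕ) % n = (i:ℕ))).card = d+1 := by
  have := Finset.card_bij'
    (i := fun (j : Fin (d+1)) (_ : j ∈ Finset.univ) =>
      (⟨(i:ℕ)+(j:ℕ)*n, idx_lt i j.isLt⟩ : Fin (n*(d+1))))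
    (j := fun (r : Fin (n*(d+1))) (_ : r ∈ Finset.univ.filter
        (fun r : Fin (n*(d+1)) => (r:ℕ) % n = (i:ℕ))) =>
      (⟨(r:ℕ)/n, Nat.div_lt_of_lt_mul r.isLt⟩ : Fin (d+1)))
    (hi := ?_) (hj := ?_) ?_ ?_
  · rw [← this, Finset.card_univ, Fintype.card_fin]
  · intro j _
    rw [Finset.mem_filter]
    refine ⟨Finset.mem_univ _, ?_⟩
    simp [Nat.add_mul_mod_self_right, Nat.mod_eq_of_lt i.isLt]
  · intro r _; exact Finset.mem_univ _
  · intro j _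
    apply Fin.ext
    simp [Nat.add_mul_div_right _ _ h0, Nat.div_eq_of_lt i.isLt]
  · intro r hr
    have h2 : (r:ℕ) % n = (i:ℕ) := (Finset.mem_filter.mp hr).2
    apply Fin.ext
    show (i:ℕ) + ((r:ℕ)/n)*n = (r:ℕ)
    rw [← h2]
    exact Nat.mod_add_div' _ _

/-- Pivotal columns are linearly independent. -/
lemma piv_cols_indep :
    LinearIndependent K (fun j : {j : Fin (n*(d+1)) // Pivotal A j} => (fun k => A k j.1)) := by
  rw [Fintype.linearIndependent_iff]
  intro g hsum
  set w : Fin (n*(d+1)) → K := fun ℓ => if hp : Pivotal A ℓ then g ⟨ℓ, hp⟩ else 0 with hw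
  have hsupp : ∀ j, ¬ Pivotal A j → w j = 0 := fun j hj => dif_neg hj
  have hker : A.mulVec w = 0 := by
    rw [mulVec_eq_sum_cols]
    have hA1 : ∑ ℓ : Fin (n*(d+1)), w ℓ • (fun k => A k ℓ)
        = ∑ ℓ ∈ Finset.univ.filter (fun ℓ => Pivotal A ℓ), w ℓ • (fun k => A k ℓ) := by
      refine (Finset.sum_subset (Finset.filter_subset _ _) ?_).symm
      intro x _ hx
      have hnp : ¬ Pivotal A x := fun hp =>
        hx (Finset.mem_filter.mpr ⟨Finset.mem_univ _, hp⟩)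
      simp [hsupp x hnp]
    have hA2 : ∑ ℓ ∈ Finset.univ.filter (fun ℓ => Pivotal A ℓ), w ℓ • (fun k => A k ℓ)
        = ∑ j : {j : Fin (n*(d+1)) // Pivotal A j}, w j.1 • (fun k => A k j.1) :=
      Finset.sum_subtype _ (fun x => by simp) _
    rw [hA1, hA2, ← hsum]
    apply Finset.sum_congr rfl
    intro j _
    congr 1
    exact dif_pos j.2
  have hw0 := piv_indep A w hsupp hker
  intro j
  have h3 := congrFun hw0 j.1
  simp only [hw, Pi.zero_apply] at h3
  rw [dif_pos j.2] at h3
  exact h3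

lemma piv_card_le :
    (Finset.univ.filter (fun j : Fin (n*(d+1)) => Pivotal A j)).card ≤ 2*d+1 := by
  have h1 := LinearIndependent.fintype_card_le_finrank (piv_cols_indep (A := A))
  rw [Module.finrank_fin_fun] at h1
  rwa [Fintype.card_subtype] at h1

/-- Whether residue class `i` contains a non-pivotal column. -/
def ClassHasNP (A : Matrix (Fin (2*d+1)) (Fin (n*(d+1))) K) (i : Fin n) : Prop :=
  ∃ r : Fin (n*(d+1)), ¬ Pivotal A r ∧ (r:ℕ) % n = (i:ℕ)

lemma at_most_one_empty (h0 : 0 < n) {i j : Fin n} (hij : i ≠ j)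
    (hi : ¬ ClassHasNP A i) (hj : ¬ ClassHasNP A j) : False := by
  have hsub : Finset.univ.filter (fun r : Fin (n*(d+1)) =>
      (r:ℕ) % n = (i:ℕ) ∨ (r:ℕ) % n = (j:ℕ))
      ⊆ Finset.univ.filter (fun r => Pivotal A r) := by
    intro r hr
    obtain ⟨-, hr2⟩ := Finset.mem_filter.mp hr
    rw [Finset.mem_filter]
    refine ⟨Finset.mem_univ _, ?_⟩
    by_contra hp
    rcases hr2 with h|h
    · exact hi ⟨r, hp, h⟩
    · exact hj ⟨r, hp, h⟩
  have hcard : (Finset.univ.filter (fun r : Fin (n*(d+1)) =>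
      (r:ℕ) % n = (i:ℕ) ∨ (r:ℕ) % n = (j:ℕ))).card = 2*(d+1) := by
    rw [Finset.filter_or, Finset.card_union_of_disjoint]
    · rw [class_card h0 i, class_card h0 j]; ring
    · rw [Finset.disjoint_left]
      intro r hri hrj
      exact hij (Fin.ext (((Finset.mem_filter.mp hri).2.symm).trans
        (Finset.mem_filter.mp hrj).2))
  have := Finset.card_le_card hsub
  rw [hcard] at this
  have := le_trans this (piv_card_le (A := A))
  omega

/-- The linear functional `x ↦ ∑ LV a i * x i`. -/
def lvFun (a : Fin n → K[X]) : (Fin n → K) →ₗ[K] K where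
  toFun x := ∑ i, LV a i * x i
  map_add' x y := by
    simp only [Pi.add_apply, mul_add, Finset.sum_add_distrib]
  map_smul' c x := by
    simp only [Pi.smul_apply, smul_eq_mul, RingHom.id_apply, Finset.mul_sum]
    exact Finset.sum_congr rfl fun i _ => by ring

lemma lvFun_ne_zero (h0 : 0 < n) {a : Fin n → K[X]} (ha : a ≠ 0) :
    ∃ y, lvFun a y ≠ 0 := by
  obtain ⟨i, hi⟩ := LVa_ne_zero h0 ha
  refine ⟨(Pi.single i 1 : Fin n → K), ?_⟩
  simp only [lvFun, LinearMap.coe_mk, AddHom.coe_mk]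
  rw [Finset.sum_eq_single i]
  · simp [hi]
  · intro b _ hb
    rw [Pi.single_eq_of_ne hb, mul_zero]
  · intro hmem; exact absurd (Finset.mem_univ _) hmem

lemma fker_finrank (hn : 1 < n) (f : (Fin n → K) →ₗ[K] K) (hf : ∃ y, f y ≠ 0) :
    Module.finrank K (LinearMap.ker f) = n - 1 := by
  have hsurj : Function.Surjective f := by
    obtain ⟨y, hy⟩ := hf
    intro c
    refine ⟨(c * (f y)⁻¹) • y, ?_⟩
    rw [map_smul, smul_eq_mul]
    field_simp
  have hrange : LinearMap.range f = ⊤ := LinearMap.range_eq_top.mpr hsurj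
  have h1 := LinearMap.finrank_range_add_finrank_ker f
  rw [hrange] at h1
  have h2 : Module.finrank K (⊤ : Submodule K K) = 1 := by
    rw [finrank_top]; exact Module.finrank_self K
  rw [h2, Module.finrank_fin_fun] at h1
  omega

end PartG
section PartH
variable {K : Type*} [Field K] {n d : ℕ}
variable {A : Matrix (Fin (2*d+1)) (Fin (n*(d+1))) K} {B : Fin (n*(d+1)) → Fin (n*(d+1)) → K}

lemma flatv_shift (h0 : 0 < n) {v : Fin (n*(d+1)) → K}
    (hv : ∀ ℓ : Fin (n*(d+1)), n*d ≤ (ℓ:ℕ) → v ℓ = 0) :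
    flatv d (fun ℓ : Fin (n*(d+1)) =>
      if hle : n ≤ (ℓ:ℕ) then v ⟨(ℓ:ℕ)-n, lt_of_le_of_lt (Nat.sub_le _ _) ℓ.isLt⟩ else 0)
      = (X : K[X]) • flatv d v := by
  set w : Fin (n*(d+1)) → K := fun ℓ =>
      if hle : n ≤ (ℓ:ℕ) then v ⟨(ℓ:ℕ)-n, lt_of_le_of_lt (Nat.sub_le _ _) ℓ.isLt⟩ else 0
    with hwdef
  funext i
  apply Polynomial.ext
  intro j
  have hXp : ((X : K[X]) • flatv d v) i = X * flatv d v i := by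
    rw [Pi.smul_apply, smul_eq_mul]
  rw [hXp]
  cases j with
  | zero =>
    rw [Polynomial.mul_coeff_zero, Polynomial.coeff_X_zero, zero_mul]
    rw [flatv_coeff _ _ (Nat.succ_pos d)]
    apply dif_neg
    show ¬ n ≤ (i:ℕ) + 0*n
    simp only [zero_mul, add_zero]
    exact not_le.mpr i.isLt
  | succ j =>
    rw [Polynomial.coeff_X_mul]
    by_cases hj : j + 1 < d + 1
    · rw [flatv_coeff _ _ hj, flatv_coeff _ _ (by omega : j < d+1)]
      have hle : n ≤ (i:ℕ) + (j+1)*n := by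
        have h1 : (j+1)*n = j*n + n := by rw [Nat.add_mul, one_mul]
        omega
      simp only [hwdef]
      rw [dif_pos hle]
      congr 1
      apply Fin.ext
      show (i:ℕ) + (j+1)*n - n = (i:ℕ) + j*n
      have h1 : (j+1)*n = j*n + n := by rw [Nat.add_mul, one_mul]
      omega
    · rw [flatv_coeff_hi _ _ (by omega : d < j+1)]
      by_cases hjd : j < d + 1
      · have hjd' : j = d := by omega
        rw [flatv_coeff _ _ hjd]
        symm
        apply hv
        show n*d ≤ (i:ℕ) + j*n
        rw [hjd', mul_comm]
        omega
      · rw [flatv_coeff_hi _ _ (by omega : d < j)]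

lemma u_mem_span (h0 : 0 < n) (a : Fin n → K[X]) (hA : A = coefA d h0 a)
    (hda : ∀ i, (a i).natDegree ≤ d) (hB : IsEchelonNull A B) :
    ∀ r : Fin (n*(d+1)), ¬ Pivotal A r →
      flatv d (B r) ∈ Submodule.span K[X]
        (Set.range fun r : {r : Fin (n*(d+1)) // BasicNP n A r} => flatv d (B r.1)) := by
  set T := Submodule.span K[X]
    (Set.range fun r : {r : Fin (n*(d+1)) // BasicNP n A r} => flatv d (B r.1)) with hT
  suffices H : ∀ m : ℕ, ∀ r : Fin (n*(d+1)), (r:ℕ) = m → ¬ Pivotal A r → flatv d (B r) ∈ T by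
    exact fun r hr => H (r:ℕ) r rfl hr
  intro m
  induction m using Nat.strong_induction_on with
  | _ m IH =>
    intro r hrm hnp
    by_cases hb : BasicNP n A r
    · exact Submodule.subset_span ⟨⟨r, hb⟩, rfl⟩
    · obtain ⟨hnr, hnprm⟩ := nonbasic_step h0 a hA hda hnp hb
      set rm : Fin (n*(d+1)) := ⟨(r:ℕ) - n, lt_of_le_of_lt (Nat.sub_le _ _) r.isLt⟩ with hrmd
      have hrmlt : (rm:ℕ) < (r:ℕ) := by
        show (r:ℕ) - n < (r:ℕ)
        omega
      -- the shifted vector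
      set w : Fin (n*(d+1)) → K := fun ℓ =>
          if hle : n ≤ (ℓ:ℕ) then B rm ⟨(ℓ:ℕ)-n, lt_of_le_of_lt (Nat.sub_le _ _) ℓ.isLt⟩ else 0
        with hwdef
      have hvtop : ∀ ℓ : Fin (n*(d+1)), n*d ≤ (ℓ:ℕ) → B rm ℓ = 0 := by
        intro ℓ hℓ
        apply B_gt_zero hB hnprm
        show (rm:ℕ) < (ℓ:ℕ)
        have := r.isLt
        show (r:ℕ) - n < (ℓ:ℕ)
        have h2 : n*(d+1) = n*d + n := by ring
        omega
      have hflat : flatv d w = (X : K[X]) • flatv d (B rm) := flatv_shift h0 hvtop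
      have hwker : A.mulVec w = 0 := by
        rw [ker_iff h0 a hA hda w, hflat]
        exact Submodule.smul_mem _ _ ((ker_iff h0 a hA hda (B rm)).mp (hB rm hnprm).1)
      have hexp := ker_expand hB w hwker
      -- w r = 1
      have hwr : w r = 1 := by
        rw [hwdef]
        simp only
        rw [dif_pos hnr]
        have he : (⟨(r:ℕ)-n, lt_of_le_of_lt (Nat.sub_le _ _) r.isLt⟩ : Fin (n*(d+1))) = rm := rfl
        rw [he]
        exact (hB rm hnprm).2.1
      -- apply flatv to the expansion
      have hexp2 : flatv d w = ∑ r' ∈ Finset.univ.filter (fun r' => ¬ Pivotal A r'),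
          w r' • flatv d (B r') := by
        have h1 : flatv d w = flatvL K n d w := rfl
        rw [h1]
        conv_lhs => rw [hexp]
        rw [map_sum]
        apply Finset.sum_congr rfl
        intro r' _
        rw [map_smul]
        rfl
      have hrQ : r ∈ Finset.univ.filter (fun r' => ¬ Pivotal A r') :=
        Finset.mem_filter.mpr ⟨Finset.mem_univ _, hnp⟩
      have hsplit : flatv d w = w r • flatv d (B r)
          + ∑ r' ∈ (Finset.univ.filter (fun r' => ¬ Pivotal A r')).erase r,
              w r' • flatv d (B r') := by
        rw [hexp2, ← Finset.add_sum_erase _ _ hrQ]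
      rw [hwr, one_smul] at hsplit
      have hBr : flatv d (B r) = flatv d w
          - ∑ r' ∈ (Finset.univ.filter (fun r' => ¬ Pivotal A r')).erase r,
              w r' • flatv d (B r') := by
        rw [hsplit]; abel
      rw [hBr, hflat]
      apply Submodule.sub_mem
      · exact Submodule.smul_mem _ _ (IH (rm:ℕ) (hrm ▸ hrmlt) rm rfl hnprm)
      · apply Submodule.sum_mem
        intro r' hr'
        have hr'Q := Finset.mem_of_mem_erase hr'
        have hr'ne := Finset.ne_of_mem_erase hr'
        have hr'np : ¬ Pivotal A r' := (Finset.mem_filter.mp hr'Q).2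
        by_cases hw0 : w r' = 0
        · rw [hw0, zero_smul]; exact Submodule.zero_mem _
        · -- w r' ≠ 0 forces r' < r
          have hr'n : n ≤ (r':ℕ) := by
            by_contra hc
            exact hw0 (dif_neg hc)
          have hBval : B rm ⟨(r':ℕ)-n, lt_of_le_of_lt (Nat.sub_le _ _) r'.isLt⟩ ≠ 0 := by
            intro hc
            apply hw0
            rw [hwdef]
            simp only
            rw [dif_pos hr'n]
            exact hc
          set j : Fin (n*(d+1)) := ⟨(r':ℕ)-n, lt_of_le_of_lt (Nat.sub_le _ _) r'.isLt⟩ with hjd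
          have hcases : j = rm ∨ (Pivotal A j ∧ j < rm) := by
            by_contra hc
            push_neg at hc
            obtain ⟨hc1, hc2⟩ := hc
            obtain ⟨-, -, h3⟩ := hB rm hnprm
            exact hBval (h3 j hc1 (fun hand => absurd hand.2 (not_lt.mpr (hc2 hand.1))))
          have hr'r : (r':ℕ) < (r:ℕ) := by
            rcases hcases with h|h
            · exfalso
              apply hr'ne
              apply Fin.ext
              have := congrArg Fin.val h
              show (r':ℕ) = (r:ℕ)
              simp only [hjd] at this
              have h5 : (r':ℕ) - n = (r:ℕ) - n := congrArg Fin.val h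
              omega
            · have := h.2
              have hjlt : (r':ℕ) - n < (r:ℕ) - n := this
              omega
          apply Submodule.smul_of_tower_mem
          exact IH (r':ℕ) (hrm ▸ hr'r) r' rfl hr'np

end PartH
section PartI
variable {K : Type*} [Field K] {n d : ℕ}
variable {A : Matrix (Fin (2*d+1)) (Fin (n*(d+1))) K} {B : Fin (n*(d+1)) → Fin (n*(d+1)) → K}

lemma syz_le_span (hn : 1 < n) (h0 : 0 < n) {a : Fin n → K[X]} (ha : a ≠ 0)
    (hd : vdeg a = d) (hA : A = coefA d h0 a) (hda : ∀ i, (a i).natDegree ≤ d)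
    (hB : IsEchelonNull A B)
    (hLVind : LinearIndependent K
      (fun r : {r : Fin (n*(d+1)) // BasicNP n A r} => LV (flatv d (B r.1))))
    (hcard : Fintype.card {r : Fin (n*(d+1)) // BasicNP n A r} = n - 1) :
    ∀ h ∈ syz a, h ∈ Submodule.span K[X]
      (Set.range fun r : {r : Fin (n*(d+1)) // BasicNP n A r} => flatv d (B r.1)) := by
  set T := Submodule.span K[X]
    (Set.range fun r : {r : Fin (n*(d+1)) // BasicNP n A r} => flatv d (B r.1)) with hT
  have humem := u_mem_span h0 a hA hda hB
  have husyz : ∀ r : Fin (n*(d+1)), ¬ Pivotal A r → flatv d (B r) ∈ syz a :=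
    fun r hr => (ker_iff h0 a hA hda (B r)).mp (hB r hr).1
  suffices H : ∀ e : ℕ, ∀ h, h ∈ syz a → vdeg h ≤ e → h ∈ T by
    exact fun h hh => H (vdeg h) h hh le_rfl
  intro e
  induction e using Nat.strong_induction_on with
  | _ e IH =>
    intro h hsyz hve
    by_cases hcase : vdeg h ≤ d
    · -- degree at most d: use the kernel of A
      have hdeg : ∀ i, (h i).natDegree ≤ d := fun i => le_trans (vdeg_entry_le h i) hcase
      set v : Fin (n*(d+1)) → K :=
        fun ℓ => (h ⟨(ℓ:ℕ)%n, Nat.mod_lt _ h0⟩).coeff ((ℓ:ℕ)/n) with hv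
      have hfv : flatv d v = h := flatv_eq_self h0 h hdeg
      have hker : A.mulVec v = 0 := by
        rw [ker_iff h0 a hA hda v, hfv]
        exact hsyz
      have hexp := ker_expand hB v hker
      have hrepr : h = ∑ r' ∈ Finset.univ.filter (fun r' => ¬ Pivotal A r'),
          v r' • flatv d (B r') := by
        rw [← hfv]
        have h1 : flatv d v = flatvL K n d v := rfl
        rw [h1]
        conv_lhs => rw [hexp]
        rw [map_sum]
        apply Finset.sum_congr rfl
        intro r' _
        rw [map_smul]
        rfl
      rw [hrepr]
      apply Submodule.sum_mem
      intro r' hr'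
      have hr'np : ¬ Pivotal A r' := (Finset.mem_filter.mp hr').2
      exact Submodule.smul_of_tower_mem _ _ (humem r' hr'np)
    · -- degree larger than d: reduce the degree using the leading vectors
      push_neg at hcase
      have he0pos : 0 < vdeg h := lt_of_le_of_lt (Nat.zero_le d) hcase
      have hperp : lvFun a (LV h) = 0 := by
        show ∑ i, LV a i * LV h i = 0
        exact syz_perp hsyz
      have hfne : lvFun a ≠ 0 := by
        obtain ⟨y, hy⟩ := lvFun_ne_zero h0 ha
        intro hz
        rw [hz] at hy
        exact hy rfl
      have hmem := hyperplane_span hn (lvFun a) hfne hcard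
        (fun r : {r : Fin (n*(d+1)) // BasicNP n A r} => LV (flatv d (B r.1))) hLVind
        (fun r => by
          show ∑ i, LV a i * LV (flatv d (B r.1)) i = 0
          exact syz_perp (husyz r.1 r.2.1)) hperp
      obtain ⟨c, hc⟩ := (Submodule.mem_span_range_iff_exists_fun K).mp hmem
      set g : {r : Fin (n*(d+1)) // BasicNP n A r} → K[X] :=
        fun r => Polynomial.C (c r) * X^(vdeg h - (r.1:ℕ)/n) with hg
      set h' : Fin n → K[X] := h - ∑ r, g r • flatv d (B r.1) with hh'
      have hsyz' : h' ∈ syz a :=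
        Submodule.sub_mem _ hsyz (Submodule.sum_mem _
          (fun r _ => Submodule.smul_mem _ _ (husyz r.1 r.2.1)))
      have hgdeg : ∀ r : {r : Fin (n*(d+1)) // BasicNP n A r},
          (g r).natDegree ≤ vdeg h - (r.1:ℕ)/n := by
        intro r
        rw [hg]
        refine le_trans (Polynomial.natDegree_C_mul_le _ _) ?_
        rw [Polynomial.natDegree_X_pow]
      have hterm : ∀ (r : {r : Fin (n*(d+1)) // BasicNP n A r}) (i : Fin n),
          (g r * flatv d (B r.1) i).coeff (vdeg h) = c r * LV (flatv d (B r.1)) i := by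
        intro r i
        have hμ : (r.1:ℕ)/n ≤ d := blk_le r.1
        have hdecomp : vdeg h = (vdeg h - (r.1:ℕ)/n) + (r.1:ℕ)/n := by omega
        rw [hdecomp, coeff_mul_top _ _ _ _ (hgdeg r) (u_natDegree_le hB r.2.1 i)]
        congr 1
        · rw [hg]
          simp only
          rw [Polynomial.coeff_C_mul, Polynomial.coeff_X_pow, if_pos rfl, mul_one]
        · show (flatv d (B r.1) i).coeff ((r.1:ℕ)/n) = LV (flatv d (B r.1)) i
          unfold LV
          rw [u_vdeg hB r.2.1]
      have hco : ∀ i, (h' i).coeff (vdeg h) = 0 := by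
        intro i
        have h1 : h' i = h i - ∑ r, g r * flatv d (B r.1) i := by
          rw [hh']
          simp only [Pi.sub_apply, Finset.sum_apply, Pi.smul_apply, smul_eq_mul]
        rw [h1, Polynomial.coeff_sub, Polynomial.finset_sum_coeff]
        rw [Finset.sum_congr rfl (fun r _ => hterm r i)]
        have h4 := congrFun hc i
        rw [Finset.sum_apply] at h4
        simp only [Pi.smul_apply, smul_eq_mul] at h4
        rw [show (h i).coeff (vdeg h) = LV h i from rfl, ← h4]
        exact sub_self _
      have hdeg' : ∀ i, (h' i).natDegree ≤ vdeg h := by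
        intro i
        have h1 : h' i = h i - ∑ r, g r * flatv d (B r.1) i := by
          rw [hh']
          simp only [Pi.sub_apply, Finset.sum_apply, Pi.smul_apply, smul_eq_mul]
        rw [h1]
        refine le_trans (Polynomial.natDegree_sub_le _ _) (max_le (vdeg_entry_le h i) ?_)
        apply Polynomial.natDegree_sum_le_of_forall_le
        intro r _
        refine le_trans Polynomial.natDegree_mul_le ?_
        have h2 := hgdeg r
        have h3 := u_natDegree_le hB r.2.1 i
        have hμ : (r.1:ℕ)/n ≤ d := blk_le r.1
        omega
      have hv' : vdeg h' < vdeg h := by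
        have hlt : ∀ i, (h' i).natDegree < vdeg h := by
          intro i
          rcases eq_or_ne (h' i) 0 with hz|hz
          · rw [hz]
            simpa using he0pos
          · rcases lt_or_eq_of_le (hdeg' i) with h6|h6
            · exact h6
            · exfalso
              have h7 : (h' i).coeff ((h' i).natDegree) ≠ 0 :=
                Polynomial.leadingCoeff_ne_zero.mpr hz
              rw [h6] at h7
              exact h7 (hco i)
        exact Finset.sup_lt_iff (by simpa using he0pos) |>.mpr (fun i _ => hlt i)
      have hmem' : h' ∈ T :=
        IH (vdeg h') (lt_of_lt_of_le hv' hve) h' hsyz' le_rfl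
      have hfinal : h = h' + ∑ r, g r • flatv d (B r.1) := by
        rw [hh']
        abel
      rw [hfinal]
      exact Submodule.add_mem _ hmem'
        (Submodule.sum_mem _ (fun r _ =>
          Submodule.smul_mem _ _ (Submodule.subset_span ⟨r, rfl⟩)))

end PartI
/-- Main theorem: the basic row-echelon syzygies form a μ-basis.
The set `u = {b_r^♭ : r basic non-pivotal}` has exactly `n − 1` elements, its leading
vectors are linearly independent over `K`, and it is a basis of the `K[s]`-module
`syz a` (linearly independent over `K[s]` and spanning `syz a`). -/
theorem basic_row_echelon_syzygies_form_mu_basis {K : Type*} [Field K] {n : ℕ}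
    (hn : 1 < n) (a : Fin n → K[X]) (ha : a ≠ 0) {d : ℕ} (hd : vdeg a = d)
    (A : Matrix (Fin (2*d+1)) (Fin (n*(d+1))) K)
    (hA : A = coefA d (Nat.zero_lt_of_lt hn) a)
    (B : Fin (n*(d+1)) → Fin (n*(d+1)) → K) (hB : IsEchelonNull A B) :
    {r : Fin (n*(d+1)) | BasicNP n A r}.ncard = n - 1 ∧
    LinearIndependent K
      (fun r : {r : Fin (n*(d+1)) // BasicNP n A r} => LV (flatv d (B r.1))) ∧
    LinearIndependent K[X]
      (fun r : {r : Fin (n*(d+1)) // BasicNP n A r} => flatv d (B r.1)) ∧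
    Submodule.span K[X]
      (Set.range fun r : {r : Fin (n*(d+1)) // BasicNP n A r} => flatv d (B r.1))
      = syz a := by
  have h0 : 0 < n := Nat.zero_lt_of_lt hn
  have hA' : A = coefA d h0 a := hA
  have hda : ∀ i, (a i).natDegree ≤ d := fun i => hd ▸ vdeg_entry_le a i
  have husyz : ∀ r : Fin (n*(d+1)), ¬ Pivotal A r → flatv d (B r) ∈ syz a :=
    fun r hr => (ker_iff h0 a hA' hda (B r)).mp (hB r hr).1
  -- residues of basic indices are distinct
  have hres_inj : ∀ (r r' : {r : Fin (n*(d+1)) // BasicNP n A r}),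
      (r.1:ℕ) % n = (r'.1:ℕ) % n → r = r' := by
    intro r r' hmod
    apply Subtype.ext
    exact le_antisymm (r.2.2 r'.1 r'.2.1 hmod.symm) (r'.2.2 r.1 r.2.1 hmod)
  -- Part 2 : leading vectors are linearly independent
  have hLVind : LinearIndependent K
      (fun r : {r : Fin (n*(d+1)) // BasicNP n A r} => LV (flatv d (B r.1))) := by
    apply echelon_indep _ (fun r : {r : Fin (n*(d+1)) // BasicNP n A r} =>
      (⟨(r.1:ℕ) % n, Nat.mod_lt _ h0⟩ : Fin n))
    · intro r r' hmk
      exact hres_inj r r' (congrArg Fin.val hmk)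
    · intro r
      rw [u_LV_diag hB r.2.1 h0]
      exact one_ne_zero
    · intro r i hi
      exact u_LV_upper hB r.2.1 hi
  -- Part 3 : independence over K[X]
  have hPind : LinearIndependent K[X]
      (fun r : {r : Fin (n*(d+1)) // BasicNP n A r} => flatv d (B r.1)) :=
    poly_indep _ hLVind
  -- counting : not every residue class contains a non-pivotal index
  have hnotall : ¬ ∀ i : Fin n, ClassHasNP A i := by
    intro hall
    have hch : ∀ i : Fin n, ∃ rb : Fin (n*(d+1)), BasicNP n A rb ∧ (rb:ℕ) % n = (i:ℕ) := by
      intro i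
      obtain ⟨r, hr1, hr2⟩ := hall i
      obtain ⟨rb, hb1, hb2⟩ := exists_basic (A := A) hr1
      exact ⟨rb, hb1, hb2.trans hr2⟩
    choose rb hrb1 hrb2 using hch
    have hind : LinearIndependent K (fun i : Fin n => LV (flatv d (B (rb i)))) := by
      apply echelon_indep _ (fun i : Fin n => i) (Function.injective_id)
      · intro i
        have he : (⟨(rb i : ℕ) % n, Nat.mod_lt _ h0⟩ : Fin n) = i := Fin.ext (hrb2 i)
        have h2 := u_LV_diag hB (hrb1 i).1 h0
        rw [he] at h2
        rw [h2]
        exact one_ne_zero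
      · intro r i hi
        apply u_LV_upper hB (hrb1 r).1
        rw [hrb2 r]
        exact hi
    have hsple : Submodule.span K (Set.range fun i : Fin n => LV (flatv d (B (rb i))))
        ≤ LinearMap.ker (lvFun a) := by
      rw [Submodule.span_le]
      rintro y ⟨i, rfl⟩
      rw [SetLike.mem_coe, LinearMap.mem_ker]
      show ∑ j, LV a j * LV (flatv d (B (rb i))) j = 0
      exact syz_perp (husyz (rb i) (hrb1 i).1)
    have h1 : Module.finrank K (Submodule.span K
        (Set.range fun i : Fin n => LV (flatv d (B (rb i))))) = n := by
      rw [finrank_span_eq_card hind, Fintype.card_fin]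
    have h2 := Submodule.finrank_mono hsple
    rw [h1, fker_finrank hn (lvFun a) (lvFun_ne_zero h0 ha)] at h2
    omega
  obtain ⟨i0, hi0⟩ := not_forall.mp hnotall
  have huniq : ∀ j : Fin n, ¬ ClassHasNP A j → j = i0 := by
    intro j hj
    by_contra hne
    exact at_most_one_empty h0 hne hj hi0
  -- cardinality of the set of basic indices
  have hQcard : (Finset.univ.filter (fun r : Fin (n*(d+1)) => BasicNP n A r)).card = n - 1 := by
    have hbij : (Finset.univ.filter (fun r : Fin (n*(d+1)) => BasicNP n A r)).card
        = (Finset.univ.filter (fun i : Fin n => ClassHasNP A i)).card := by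
      apply Finset.card_bij
        (i := fun (r : Fin (n*(d+1))) (_ : r ∈ Finset.univ.filter
            (fun r : Fin (n*(d+1)) => BasicNP n A r)) =>
          (⟨(r:ℕ) % n, Nat.mod_lt _ h0⟩ : Fin n))
      · intro r hr
        rw [Finset.mem_filter]
        exact ⟨Finset.mem_univ _, ⟨r, (Finset.mem_filter.mp hr).2.1, rfl⟩⟩
      · intro r hr r' hr' hmk
        have hb := (Finset.mem_filter.mp hr).2
        have hb' := (Finset.mem_filter.mp hr').2
        have := hres_inj ⟨r, hb⟩ ⟨r', hb'⟩ (congrArg Fin.val hmk)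
        exact congrArg Subtype.val this
      · intro i hi
        obtain ⟨r, hr1, hr2⟩ := (Finset.mem_filter.mp hi).2
        obtain ⟨rb, hb1, hb2⟩ := exists_basic (A := A) hr1
        refine ⟨rb, Finset.mem_filter.mpr ⟨Finset.mem_univ _, hb1⟩, ?_⟩
        apply Fin.ext
        show (rb:ℕ) % n = (i:ℕ)
        rw [hb2, hr2]
    have hneg : (Finset.univ.filter (fun i : Fin n => ¬ ClassHasNP A i)).card = 1 := by
      rw [Finset.card_eq_one]
      refine ⟨i0, ?_⟩
      ext j
      rw [Finset.mem_filter, Finset.mem_singleton]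
      constructor
      · rintro ⟨-, hj⟩
        exact huniq j hj
      · rintro rfl
        exact ⟨Finset.mem_univ _, hi0⟩
    have hpart := Finset.card_filter_add_card_filter_not
      (s := (Finset.univ : Finset (Fin n))) (fun i => ClassHasNP A i)
    rw [Finset.card_univ, Fintype.card_fin, hneg] at hpart
    rw [hbij]
    omega
  have hncard : {r : Fin (n*(d+1)) | BasicNP n A r}.ncard = n - 1 := by
    have hset : {r : Fin (n*(d+1)) | BasicNP n A r}
        = ↑(Finset.univ.filter (fun r : Fin (n*(d+1)) => BasicNP n A r)) := by
      ext r
      simp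
    rw [hset, Set.ncard_coe_finset, hQcard]
  have hcardsub : Fintype.card {r : Fin (n*(d+1)) // BasicNP n A r} = n - 1 := by
    rw [Fintype.card_subtype]
    exact hQcard
  -- Part 4 : the span equals the syzygy module
  have hspan : Submodule.span K[X]
      (Set.range fun r : {r : Fin (n*(d+1)) // BasicNP n A r} => flatv d (B r.1))
      = syz a := by
    apply le_antisymm
    · rw [Submodule.span_le]
      rintro y ⟨r, rfl⟩
      exact husyz r.1 r.2.1
    · intro h hh
      exact syz_le_span hn h0 ha hd hA' hda hB hLVind hcardsub h hh
  exact ⟨hncard, hLVind, hPind, hspan⟩
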